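/- Let n ≥ 2 be even, let ρ = |W_n⟩⟨W_n| be the W-state projector, and let ρ' be any n-qubit quantum state with ‖ρ − ρ'‖₁ ≤ 1/10. Then for every ε with 0 ≤ ε < 2/n², the cumulative distribution function of ρ' satisfies F_{ρ'}(ε) ≤ 5·‖ρ − ρ'‖₁. -/

import Mathlib

open Matrix Kronecker
open scoped ComplexOrder

noncomputable def pauli1 : Fin 4 → Matrix (Fin 2) (Fin 2) ℂ
  | 0 => !![1, 0; 0, 1]
  | 1 => !![0, 1; 1, 0]
  | 2 => !![0, -Complex.I; Complex.I, 0]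
  | 3 => !![1, 0; 0, -1]

noncomputable def PauliOp {n : ℕ} (a : Fin n → Fin 4) :
    Matrix (Fin n → Fin 2) (Fin n → Fin 2) ℂ :=
  Matrix.of fun z z' => ∏ i, pauli1 (a i) (z i) (z' i)

/-- The trace norm of a matrix: the trace of the positive semidefinite square root of `Aᴴ * A`. -/
noncomputable def traceNorm {m : Type*} [Fintype m] [DecidableEq m]
    (A : Matrix m m ℂ) : ℝ :=
  (((Matrix.posSemidef_conjTranspose_mul_self A).1.eigenvectorUnitary : Matrix m m ℂ) *
    Matrix.diagonal (fun i => ((Real.sqrt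
      ((Matrix.posSemidef_conjTranspose_mul_self A).1.eigenvalues i) : ℝ) : ℂ)) *
    (star (Matrix.posSemidef_conjTranspose_mul_self A).1.eigenvectorUnitary :
      Matrix m m ℂ)).trace.re

/-- A quantum state: positive semidefinite with unit trace. -/
structure IsState {m : Type*} [Fintype m] (ρ : Matrix m m ℂ) : Prop where
  posSemidef : ρ.PosSemidef
  trace_one : ρ.trace = 1

/-- Pauli expectation value `⟨P_a⟩_ρ`. -/
noncomputable def pExp {n : ℕ} (ρ : Matrix (Fin n → Fin 2) (Fin n → Fin 2) ℂ)
    (a : Fin n → Fin 4) : ℝ := ((PauliOp a * ρ).trace).re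

/-- The purity `tr ρ²`. -/
noncomputable def purity {m : Type*} [Fintype m] (ρ : Matrix m m ℂ) : ℝ :=
  ((ρ * ρ).trace).re

/-- The Pauli distribution `p_ρ`. -/
noncomputable def pDist {n : ℕ} (ρ : Matrix (Fin n → Fin 2) (Fin n → Fin 2) ℂ)
    (a : Fin n → Fin 4) : ℝ := (pExp ρ a) ^ 2 / (2 ^ n * purity ρ)

/-- The cumulative distribution function `F_ρ`. -/
noncomputable def cdf {n : ℕ} (ρ : Matrix (Fin n → Fin 2) (Fin n → Fin 2) ℂ)
    (ε : ℝ) : ℝ := ∑ a : Fin n → Fin 4, if (pExp ρ a) ^ 2 ≤ ε then pDist ρ a else 0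

/-- The maximally entangled state `|Φ₀⟩`. -/
noncomputable def Phi0 (n : ℕ) : (Fin n → Fin 2) × (Fin n → Fin 2) → ℂ :=
  fun p => if p.1 = p.2 then (↑(Real.sqrt (2 ^ n)))⁻¹ else 0

/-- The Bell state `|Φ_a⟩ = (1 ⊗ P_a)|Φ₀⟩`. -/
noncomputable def BellVec {n : ℕ} (a : Fin n → Fin 4) :
    (Fin n → Fin 2) × (Fin n → Fin 2) → ℂ :=
  ((1 : Matrix (Fin n → Fin 2) (Fin n → Fin 2) ℂ) ⊗ₖ PauliOp a).mulVec (Phi0 n)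

/-- The Bell distribution `q_ρ(a) = ⟨Φ_a| ρ ⊗ ρ |Φ_a⟩`. -/
noncomputable def qDist {n : ℕ} (ρ : Matrix (Fin n → Fin 2) (Fin n → Fin 2) ℂ)
    (a : Fin n → Fin 4) : ℝ :=
  (star (BellVec a) ⬝ᵥ ((ρ ⊗ₖ ρ).mulVec (BellVec a))).re

/-- The W state. -/
noncomputable def Wstate (n : ℕ) : (Fin n → Fin 2) → ℂ :=
  fun z => if (∑ i, (z i : ℕ)) = 1 then (↑(Real.sqrt n))⁻¹ else 0

/-- The W state projector `|W_n⟩⟨W_n|`. -/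
noncomputable def Wproj (n : ℕ) : Matrix (Fin n → Fin 2) (Fin n → Fin 2) ℂ :=
  Matrix.vecMulVec (Wstate n) (star (Wstate n))

namespace S15

lemma pauli1_conj (b : Fin 4) (x y : Fin 2) :
    (starRingEnd ℂ) (pauli1 b x y) = pauli1 b y x := by
  fin_cases b <;> fin_cases x <;> fin_cases y <;> simp [pauli1]

lemma pauli1_complete (x y x' y' : Fin 2) :
    ∑ b : Fin 4, pauli1 b x y * pauli1 b x' y' =
      if x = y' ∧ y = x' then 2 else 0 := by
  fin_cases x <;> fin_cases y <;> fin_cases x' <;> fin_cases y' <;>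
    simp [Fin.sum_univ_four, pauli1] <;> ring_nf <;>
    simp [Complex.I_sq]

lemma PauliOp_isHermitian {n : ℕ} (a : Fin n → Fin 4) :
    (PauliOp a).IsHermitian := by
  ext z z'
  simp only [conjTranspose_apply, PauliOp, Matrix.of_apply, map_prod]
  simp [pauli1_conj]

lemma trace_PauliOp_mul {n : ℕ} (A : Matrix (Fin n → Fin 2) (Fin n → Fin 2) ℂ)
    (a : Fin n → Fin 4) :
    (PauliOp a * A).trace
      = ∑ p : (Fin n → Fin 2) × (Fin n → Fin 2),
          (∏ k, pauli1 (a k) (p.1 k) (p.2 k)) * A p.2 p.1 := by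
  rw [Fintype.sum_prod_type]
  simp [Matrix.trace, Matrix.diag, Matrix.mul_apply, PauliOp]

lemma parseval {n : ℕ} (A : Matrix (Fin n → Fin 2) (Fin n → Fin 2) ℂ) :
    ∑ a : Fin n → Fin 4, ((PauliOp a * A).trace)^2 = 2^n * (A*A).trace := by
  have key : ∀ z w z' w' : Fin n → Fin 2,
      ∑ a : Fin n → Fin 4,
        (∏ k, pauli1 (a k) (z k) (w k)) * (∏ k, pauli1 (a k) (z' k) (w' k))
        = if z = w' ∧ z' = w then (2:ℂ)^n else 0 := by
    intro z w z' w'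
    have h1 : ∀ a : Fin n → Fin 4,
        (∏ k, pauli1 (a k) (z k) (w k)) * (∏ k, pauli1 (a k) (z' k) (w' k))
          = ∏ k, (pauli1 (a k) (z k) (w k) * pauli1 (a k) (z' k) (w' k)) := by
      intro a; rw [Finset.prod_mul_distrib]
    simp_rw [h1]
    have h2 : ∑ a : Fin n → Fin 4,
        ∏ k, (pauli1 (a k) (z k) (w k) * pauli1 (a k) (z' k) (w' k))
        = ∏ k, ∑ b : Fin 4, (pauli1 b (z k) (w k) * pauli1 b (z' k) (w' k)) := by
      rw [Finset.prod_univ_sum]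
      rw [Fintype.piFinset_univ]
    rw [h2]
    simp_rw [pauli1_complete]
    by_cases h : z = w' ∧ z' = w
    · rw [if_pos h]
      have : ∀ k, (if z k = w' k ∧ w k = z' k then (2:ℂ) else 0) = 2 := by
        intro k; rw [if_pos ⟨congrFun h.1 k, (congrFun h.2 k).symm⟩]
      simp_rw [this]
      rw [Finset.prod_const, Finset.card_univ, Fintype.card_fin]
    · rw [if_neg h]
      rw [not_and_or] at h
      rcases h with h | h
      · obtain ⟨k, hk⟩ := Function.ne_iff.mp h
        exact Finset.prod_eq_zero (Finset.mem_univ k) (if_neg (fun hc => hk hc.1))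
      · obtain ⟨k, hk⟩ := Function.ne_iff.mp h
        exact Finset.prod_eq_zero (Finset.mem_univ k) (if_neg (fun hc => hk hc.2.symm))
  simp_rw [trace_PauliOp_mul, sq, Finset.sum_mul_sum]
  rw [Finset.sum_comm]
  have h3 : ∀ p : (Fin n → Fin 2) × (Fin n → Fin 2),
      ∑ a : Fin n → Fin 4, ∑ q : (Fin n → Fin 2) × (Fin n → Fin 2),
        ((∏ k, pauli1 (a k) (p.1 k) (p.2 k)) * A p.2 p.1) *
        ((∏ k, pauli1 (a k) (q.1 k) (q.2 k)) * A q.2 q.1)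
      = 2^n * (A p.2 p.1 * A p.1 p.2) := by
    intro p
    rw [Finset.sum_comm]
    have : ∀ q : (Fin n → Fin 2) × (Fin n → Fin 2),
        ∑ a : Fin n → Fin 4,
          ((∏ k, pauli1 (a k) (p.1 k) (p.2 k)) * A p.2 p.1) *
          ((∏ k, pauli1 (a k) (q.1 k) (q.2 k)) * A q.2 q.1)
        = (if p.1 = q.2 ∧ q.1 = p.2 then (2:ℂ)^n else 0) * (A p.2 p.1 * A q.2 q.1) := by
      intro q
      rw [← key p.1 p.2 q.1 q.2]
      rw [Finset.sum_mul]
      congr 1; ext a; ring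
    simp_rw [this]
    have h4 : ∀ q : (Fin n → Fin 2) × (Fin n → Fin 2),
        (if p.1 = q.2 ∧ q.1 = p.2 then (2:ℂ)^n else 0) * (A p.2 p.1 * A q.2 q.1)
        = if q = (p.2, p.1) then 2^n * (A p.2 p.1 * A p.1 p.2) else 0 := by
      intro q
      by_cases h : q = (p.2, p.1)
      · subst h; simp [mul_assoc]
      · rw [if_neg h, if_neg, zero_mul]
        intro hc
        exact h (Prod.ext hc.2 hc.1.symm)
    simp_rw [h4]
    exact Finset.sum_ite_eq' _ _ _  |>.trans (by simp)
  simp_rw [h3]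
  rw [← Finset.mul_sum]
  congr 1
  rw [Fintype.sum_prod_type]
  simp [Matrix.trace, Matrix.diag, Matrix.mul_apply]
  rw [Finset.sum_comm]


noncomputable def frob {m : Type*} [Fintype m] (A : Matrix m m ℂ) : ℝ :=
  ∑ z, ∑ w, Complex.normSq (A z w)

lemma frob_nonneg {m : Type*} [Fintype m] (A : Matrix m m ℂ) : 0 ≤ frob A :=
  Finset.sum_nonneg fun _ _ => Finset.sum_nonneg fun _ _ => Complex.normSq_nonneg _

lemma trace_conjTranspose_mul_self {m : Type*} [Fintype m] (A : Matrix m m ℂ) :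
    (Aᴴ * A).trace = (frob A : ℂ) := by
  simp only [Matrix.trace, Matrix.diag, Matrix.mul_apply, conjTranspose_apply, frob]
  push_cast
  rw [Finset.sum_comm]
  congr 1; ext z; congr 1; ext w
  rw [Complex.normSq_eq_conj_mul_self]; rfl

lemma trace_mul_self_of_hermitian {m : Type*} [Fintype m] {A : Matrix m m ℂ}
    (hA : A.IsHermitian) : (A * A).trace = (frob A : ℂ) := by
  rw [← trace_conjTranspose_mul_self, hA.eq]

lemma normSq_sum_mul_le {ι : Type*} (s : Finset ι) (f g : ι → ℂ) :
    Complex.normSq (∑ k ∈ s, f k * g k)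
      ≤ (∑ k ∈ s, Complex.normSq (f k)) * (∑ k ∈ s, Complex.normSq (g k)) := by
  have h1 : ‖∑ k ∈ s, f k * g k‖ ≤ ∑ k ∈ s, ‖f k‖ * ‖g k‖ := by
    refine (norm_sum_le _ _).trans (le_of_eq ?_)
    exact Finset.sum_congr rfl fun k _ => norm_mul _ _
  have h2 := Finset.sum_mul_sq_le_sq_mul_sq s (fun k => ‖f k‖) (fun k => ‖g k‖)
  calc Complex.normSq (∑ k ∈ s, f k * g k)
      = ‖∑ k ∈ s, f k * g k‖ ^ 2 := (Complex.sq_norm _).symm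
    _ ≤ (∑ k ∈ s, ‖f k‖ * ‖g k‖) ^ 2 := by
        apply pow_le_pow_left₀ (norm_nonneg _) h1
    _ ≤ (∑ k ∈ s, ‖f k‖ ^ 2) * (∑ k ∈ s, ‖g k‖ ^ 2) := h2
    _ = _ := by simp_rw [Complex.sq_norm]

lemma frob_mul_le {m : Type*} [Fintype m] (A B : Matrix m m ℂ) :
    frob (A * B) ≤ frob A * frob B := by
  have h : ∀ z w, Complex.normSq ((A * B) z w)
      ≤ (∑ k, Complex.normSq (A z k)) * (∑ k, Complex.normSq (B k w)) := by
    intro z w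
    rw [Matrix.mul_apply]
    exact normSq_sum_mul_le _ _ _
  calc frob (A * B) ≤ ∑ z, ∑ w, (∑ k, Complex.normSq (A z k)) * (∑ k, Complex.normSq (B k w)) := by
        refine Finset.sum_le_sum fun z _ => Finset.sum_le_sum fun w _ => h z w
    _ = frob A * frob B := by
        simp_rw [← Finset.mul_sum]
        rw [← Finset.sum_mul]
        congr 1
        rw [frob, Finset.sum_comm]

lemma abs_trace_mul_le {m : Type*} [Fintype m] (A B : Matrix m m ℂ) :
    ‖(A * B).trace‖ ≤ Real.sqrt (frob A) * Real.sqrt (frob B) := by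
  have htr : (A * B).trace = ∑ p : m × m, A p.1 p.2 * B p.2 p.1 := by
    rw [Fintype.sum_prod_type]
    simp [Matrix.trace, Matrix.diag, Matrix.mul_apply]
  rw [htr]
  have h1 : ‖∑ p : m × m, A p.1 p.2 * B p.2 p.1‖
      ≤ ∑ p : m × m, ‖A p.1 p.2‖ * ‖B p.2 p.1‖ := by
    refine (norm_sum_le _ _).trans (le_of_eq ?_)
    exact Finset.sum_congr rfl fun p _ => norm_mul _ _
  refine h1.trans ?_
  have h2 := Finset.sum_mul_sq_le_sq_mul_sq Finset.univ
    (fun p : m × m => ‖A p.1 p.2‖) (fun p : m × m => ‖B p.2 p.1‖)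
  have hA : ∑ p : m × m, ‖A p.1 p.2‖ ^ 2 = frob A := by
    rw [Fintype.sum_prod_type]
    simp_rw [Complex.sq_norm]; rfl
  have hB : ∑ p : m × m, ‖B p.2 p.1‖ ^ 2 = frob B := by
    rw [Fintype.sum_prod_type, Finset.sum_comm]
    simp_rw [Complex.sq_norm]; rfl
  rw [hA, hB] at h2
  have hnn : 0 ≤ ∑ p : m × m, ‖A p.1 p.2‖ * ‖B p.2 p.1‖ :=
    Finset.sum_nonneg fun p _ => mul_nonneg (norm_nonneg _) (norm_nonneg _)
  have := Real.sqrt_le_sqrt h2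
  rw [Real.sqrt_sq hnn, Real.sqrt_mul (frob_nonneg A)] at this
  exact this

lemma traceNorm_eq_sum {m : Type*} [Fintype m] [DecidableEq m] (A : Matrix m m ℂ) :
    traceNorm A = ∑ i, Real.sqrt ((Matrix.posSemidef_conjTranspose_mul_self A).1.eigenvalues i) := by
  rw [traceNorm, Matrix.trace_mul_comm, ← Matrix.mul_assoc]
  rw [show (star (Matrix.posSemidef_conjTranspose_mul_self A).1.eigenvectorUnitary : Matrix m m ℂ) *
      ((Matrix.posSemidef_conjTranspose_mul_self A).1.eigenvectorUnitary : Matrix m m ℂ) = 1 by simp,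
    Matrix.one_mul, Matrix.trace_diagonal, Complex.re_sum]
  simp

lemma traceNorm_nonneg {m : Type*} [Fintype m] [DecidableEq m] (A : Matrix m m ℂ) :
    0 ≤ traceNorm A := by
  rw [traceNorm_eq_sum]; exact Finset.sum_nonneg fun _ _ => Real.sqrt_nonneg _

lemma frob_le_sq_traceNorm {m : Type*} [Fintype m] [DecidableEq m] {Δ : Matrix m m ℂ}
    (hΔ : Δ.IsHermitian) : frob Δ ≤ (traceNorm Δ)^2 := by
  set hS := Matrix.posSemidef_conjTranspose_mul_self Δ
  have h1 : ((Δᴴ * Δ).trace) = (frob Δ : ℂ) := trace_conjTranspose_mul_self Δ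
  rw [hS.1.trace_eq_sum_eigenvalues] at h1
  have h2 : frob Δ = ∑ i, hS.1.eigenvalues i := by
    have := congrArg Complex.re h1
    rw [Complex.re_sum] at this
    simpa using this.symm
  rw [h2, traceNorm_eq_sum]
  calc ∑ i, hS.1.eigenvalues i = ∑ i, Real.sqrt (hS.1.eigenvalues i) ^ 2 :=
        Finset.sum_congr rfl fun i _ => (Real.sq_sqrt (hS.eigenvalues_nonneg i)).symm
    _ ≤ _ := Finset.sum_sq_le_sq_sum_of_nonneg fun _ _ => Real.sqrt_nonneg _

/-! ### weight-one strings -/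

def eb {n : ℕ} (i : Fin n) : Fin n → Fin 2 := fun k => if k = i then 1 else 0

lemma eb_self {n : ℕ} (i : Fin n) : eb i i = 1 := if_pos rfl
lemma eb_ne {n : ℕ} {i k : Fin n} (h : k ≠ i) : eb i k = 0 := if_neg h

lemma wt_eb {n : ℕ} (i : Fin n) : (∑ k, ((eb i k : ℕ))) = 1 := by
  have : ∀ k, ((eb i k : ℕ)) = if k = i then 1 else 0 := by
    intro k; rw [eb]; split_ifs <;> rfl
  simp_rw [this]
  simp

lemma eb_injective {n : ℕ} : Function.Injective (eb (n := n)) := by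
  intro i j h
  by_contra hij
  have h1 := congrFun h i
  rw [eb_self, eb_ne hij] at h1
  exact one_ne_zero h1

lemma weight_one_iff {n : ℕ} (z : Fin n → Fin 2) :
    (∑ k, ((z k : ℕ))) = 1 ↔ ∃ i, z = eb i := by
  constructor
  · intro h
    have hex : ∃ i, z i ≠ 0 := by
      by_contra hc
      push_neg at hc
      simp [hc] at h
    obtain ⟨i, hi⟩ := hex
    have hz1 : z i = 1 := by omega
    refine ⟨i, funext fun k => ?_⟩
    by_cases hk : k = i
    · subst hk; rw [eb_self, hz1]
    · rw [eb_ne hk]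
      have hsum := Finset.add_sum_erase Finset.univ (fun k' => ((z k' : ℕ))) (Finset.mem_univ i)
      rw [h] at hsum
      simp only [hz1] at hsum
      have hz0 : ∀ k' ∈ Finset.univ.erase i, ((z k' : ℕ)) = 0 := by
        rw [← Finset.sum_eq_zero_iff]
        omega
      have := hz0 k (Finset.mem_erase.mpr ⟨hk, Finset.mem_univ k⟩)
      omega
  · rintro ⟨i, rfl⟩; exact wt_eb i

lemma sum_weight_one {n : ℕ} {M : Type*} [AddCommMonoid M] (f : (Fin n → Fin 2) → M) :
    ∑ z : Fin n → Fin 2, (if (∑ k, ((z k : ℕ))) = 1 then f z else 0) = ∑ i, f (eb i) := by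
  classical
  rw [← Finset.sum_filter]
  have hset : Finset.univ.filter (fun z : Fin n → Fin 2 => (∑ k, ((z k : ℕ))) = 1)
      = Finset.univ.image eb := by
    ext z
    simp only [Finset.mem_filter, Finset.mem_univ, true_and, Finset.mem_image]
    rw [weight_one_iff]
    constructor
    · rintro ⟨i, rfl⟩; exact ⟨i, rfl⟩
    · rintro ⟨i, h⟩; exact ⟨i, h.symm⟩
  rw [hset, Finset.sum_image (fun i _ j _ h => eb_injective h)]

/-! ### pauli entry lemmas -/

lemma not12 {b : Fin 4} (h : ¬(b = 1 ∨ b = 2)) : b = 0 ∨ b = 3 := by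
  fin_cases b <;> simp_all

lemma not03 {b : Fin 4} (h : ¬(b = 0 ∨ b = 3)) : b = 1 ∨ b = 2 := by
  fin_cases b <;> simp_all

lemma pauli1_00 {b : Fin 4} (h : b = 0 ∨ b = 3) : pauli1 b 0 0 = 1 := by
  rcases h with h | h <;> subst h <;> simp [pauli1]

lemma pauli1_00' {b : Fin 4} (h : b = 1 ∨ b = 2) : pauli1 b 0 0 = 0 := by
  rcases h with h | h <;> subst h <;> simp [pauli1]

lemma pauli1_11' {b : Fin 4} (h : b = 1 ∨ b = 2) : pauli1 b 1 1 = 0 := by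
  rcases h with h | h <;> subst h <;> simp [pauli1]

lemma pauli1_10' {b : Fin 4} (h : b = 0 ∨ b = 3) : pauli1 b 1 0 = 0 := by
  rcases h with h | h <;> subst h <;> simp [pauli1]

lemma pauli1_01' {b : Fin 4} (h : b = 0 ∨ b = 3) : pauli1 b 0 1 = 0 := by
  rcases h with h | h <;> subst h <;> simp [pauli1]

/-! ### vanishing lemmas -/

lemma pauli_diag_zero {n : ℕ} (a : Fin n → Fin 4) (i : Fin n) (h : a i = 1 ∨ a i = 2) :
    PauliOp a (eb i) (eb i) = 0 := by
  refine Finset.prod_eq_zero (Finset.mem_univ i) ?_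
  rw [eb_self]
  exact pauli1_11' h

lemma pauli_far_zero {n : ℕ} (a : Fin n → Fin 4) {i j k : Fin n}
    (hk : a k = 1 ∨ a k = 2) (hki : k ≠ i) (hkj : k ≠ j) :
    PauliOp a (eb i) (eb j) = 0 := by
  refine Finset.prod_eq_zero (Finset.mem_univ k) ?_
  rw [eb_ne hki, eb_ne hkj]
  exact pauli1_00' hk

lemma pauli_off_zero_left {n : ℕ} (a : Fin n → Fin 4) {i j : Fin n} (hij : i ≠ j)
    (h : a i = 0 ∨ a i = 3) : PauliOp a (eb i) (eb j) = 0 := by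
  refine Finset.prod_eq_zero (Finset.mem_univ i) ?_
  rw [eb_self, eb_ne hij]
  exact pauli1_10' h

lemma pauli_off_zero_right {n : ℕ} (a : Fin n → Fin 4) {i j : Fin n} (hij : i ≠ j)
    (h : a j = 0 ∨ a j = 3) : PauliOp a (eb i) (eb j) = 0 := by
  refine Finset.prod_eq_zero (Finset.mem_univ j) ?_
  rw [eb_self, eb_ne (Ne.symm hij)]
  exact pauli1_01' h

/-! ### value lemmas -/

lemma pauli_diag_val {n : ℕ} (a : Fin n → Fin 4) (h : ∀ k, a k = 0 ∨ a k = 3) (i : Fin n) :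
    PauliOp a (eb i) (eb i) = if a i = 3 then (-1 : ℂ) else 1 := by
  have : PauliOp a (eb i) (eb i) = ∏ k, pauli1 (a k) (eb i k) (eb i k) := rfl
  rw [this, Finset.prod_eq_single i
    (fun k _ hk => by rw [eb_ne hk]; exact pauli1_00 (h k))
    (fun hi => absurd (Finset.mem_univ i) hi)]
  rw [eb_self]
  rcases h i with h' | h' <;> rw [h'] <;> simp [pauli1]

lemma pauli_off_val {n : ℕ} (a : Fin n → Fin 4) {i j : Fin n} (hij : i ≠ j)
    (hother : ∀ k, k ≠ i → k ≠ j → (a k = 0 ∨ a k = 3)) :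
    PauliOp a (eb i) (eb j) = pauli1 (a i) 1 0 * pauli1 (a j) 0 1 := by
  have h1 : PauliOp a (eb i) (eb j) = ∏ k, pauli1 (a k) (eb i k) (eb j k) := rfl
  rw [h1, ← Finset.mul_prod_erase _ _ (Finset.mem_univ i),
    ← Finset.mul_prod_erase _ _ (Finset.mem_erase.mpr ⟨Ne.symm hij, Finset.mem_univ j⟩)]
  rw [eb_self, eb_ne hij, eb_self, eb_ne (Ne.symm hij)]
  have : ∏ k ∈ (Finset.univ.erase i).erase j, pauli1 (a k) (eb i k) (eb j k) = 1 := by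
    refine Finset.prod_eq_one fun k hk => ?_
    have hkj : k ≠ j := (Finset.mem_erase.mp hk).1
    have hki : k ≠ i := (Finset.mem_erase.mp (Finset.mem_erase.mp hk).2).1
    rw [eb_ne hki, eb_ne hkj]
    exact pauli1_00 (hother k hki hkj)
  rw [this, mul_one]

/-! ### the key integrality lemma -/

lemma key_int {n : ℕ} (hne : Even n) (a : Fin n → Fin 4) :
    ∃ m : ℤ, (∑ i, ∑ j, PauliOp a (eb i) (eb j)) = ((2 * m : ℤ) : ℂ) := by
  classical
  by_cases hT : ∀ k, a k = 0 ∨ a k = 3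
  · -- no X/Y letters: diagonal case
    have hsum : (∑ i, ∑ j, PauliOp a (eb i) (eb j))
        = ∑ i, (if a i = 3 then (-1 : ℂ) else 1) := by
      refine Finset.sum_congr rfl fun i _ => ?_
      rw [Finset.sum_eq_single i
        (fun j _ hj => pauli_off_zero_left a (fun hc => hj hc.symm) (hT i))
        (fun hi => absurd (Finset.mem_univ i) hi)]
      exact pauli_diag_val a hT i
    set m' : ℤ := ∑ i, (if a i = 3 then (-1 : ℤ) else 1) with hm'def
    have hcast : (∑ i, (if a i = 3 then (-1 : ℂ) else 1)) = (m' : ℂ) := by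
      rw [hm'def]
      push_cast
      refine Finset.sum_congr rfl fun i _ => ?_
      split_ifs <;> simp
    have hdvd : (2 : ℤ) ∣ m' := by
      have h0 : ((m' : ZMod 2)) = 0 := by
        rw [hm'def]
        push_cast
        have : ∀ i : Fin n, (if a i = 3 then (-1 : ZMod 2) else 1) = 1 := by
          intro i; split_ifs <;> decide
        simp_rw [this]
        simp only [Finset.sum_const, Finset.card_univ, Fintype.card_fin, nsmul_eq_mul, mul_one]
        rw [ZMod.natCast_eq_zero_iff]
        exact hne.two_dvd
      exact (ZMod.intCast_zmod_eq_zero_iff_dvd m' 2).mp h0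
    obtain ⟨m, hm⟩ := hdvd
    exact ⟨m, by rw [hsum, hcast, hm]⟩
  · push_neg at hT
    obtain ⟨k₀, hk₀'⟩ := hT
    have hk₀ : a k₀ = 1 ∨ a k₀ = 2 := not03 (by push_neg; exact hk₀')
    by_cases hpair : ∃ i j : Fin n, i ≠ j ∧ (a i = 1 ∨ a i = 2) ∧ (a j = 1 ∨ a j = 2) ∧
        ∀ k, (a k = 1 ∨ a k = 2) → k = i ∨ k = j
    · obtain ⟨i₀, j₀, hij, hai, haj, hmax⟩ := hpair
      have hzero : ∀ i j : Fin n, ¬(i = i₀ ∧ j = j₀) → ¬(i = j₀ ∧ j = i₀) →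
          PauliOp a (eb i) (eb j) = 0 := by
        intro i j hn1 hn2
        by_cases hij' : i = j
        · subst hij'
          by_cases hai' : a i = 1 ∨ a i = 2
          · exact pauli_diag_zero a i hai'
          · by_cases hii₀ : i = i₀
            · subst hii₀
              exact pauli_far_zero a haj (fun hc => hai' (hc ▸ haj)) (fun hc => hai' (hc ▸ haj))
            · exact pauli_far_zero a hai (fun hc => hii₀ hc.symm) (fun hc => hii₀ hc.symm)
        · by_cases hai' : a i = 1 ∨ a i = 2
          · by_cases haj' : a j = 1 ∨ a j = 2
            · rcases hmax i hai' with h1 | h1 <;> rcases hmax j haj' with h2 | h2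
              · exact absurd (h1.trans h2.symm) hij'
              · exact absurd ⟨h1, h2⟩ hn1
              · exact absurd ⟨h1, h2⟩ hn2
              · exact absurd (h1.trans h2.symm) hij'
            · exact pauli_off_zero_right a hij' (not12 haj')
          · exact pauli_off_zero_left a hij' (not12 hai')
      have hrow : ∀ i : Fin n, i ≠ i₀ → i ≠ j₀ → ∑ j, PauliOp a (eb i) (eb j) = 0 := by
        intro i h1 h2
        refine Finset.sum_eq_zero fun j _ => ?_
        exact hzero i j (fun hc => h1 hc.1) (fun hc => h2 hc.1)
      have hrow1 : ∑ j, PauliOp a (eb i₀) (eb j) = PauliOp a (eb i₀) (eb j₀) := by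
        refine Finset.sum_eq_single j₀
          (fun j _ hj => hzero i₀ j (fun hc => hj hc.2) (fun hc => hij hc.1)) ?_
        exact fun hj => absurd (Finset.mem_univ j₀) hj
      have hrow2 : ∑ j, PauliOp a (eb j₀) (eb j) = PauliOp a (eb j₀) (eb i₀) := by
        refine Finset.sum_eq_single i₀
          (fun j _ hj => hzero j₀ j (fun hc => hij hc.1.symm) (fun hc => hj hc.2)) ?_
        exact fun hj => absurd (Finset.mem_univ i₀) hj
      have hS : (∑ i, ∑ j, PauliOp a (eb i) (eb j))
          = PauliOp a (eb i₀) (eb j₀) + PauliOp a (eb j₀) (eb i₀) := by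
        rw [← Finset.add_sum_erase _ _ (Finset.mem_univ i₀), hrow1,
          ← Finset.add_sum_erase _ _ (Finset.mem_erase.mpr ⟨Ne.symm hij, Finset.mem_univ j₀⟩),
          hrow2]
        have : ∑ i ∈ (Finset.univ.erase i₀).erase j₀, ∑ j, PauliOp a (eb i) (eb j) = 0 := by
          refine Finset.sum_eq_zero fun i hi => ?_
          exact hrow i (Finset.mem_erase.mp (Finset.mem_erase.mp hi).2).1
            (Finset.mem_erase.mp hi).1
        rw [this, add_zero]
      have hother : ∀ k, k ≠ i₀ → k ≠ j₀ → (a k = 0 ∨ a k = 3) := by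
        intro k h1 h2
        by_cases hk : a k = 1 ∨ a k = 2
        · rcases hmax k hk with h | h
          · exact absurd h h1
          · exact absurd h h2
        · exact not12 hk
      have hother' : ∀ k, k ≠ j₀ → k ≠ i₀ → (a k = 0 ∨ a k = 3) := fun k h1 h2 => hother k h2 h1
      have hQ1 : PauliOp a (eb i₀) (eb j₀) = pauli1 (a i₀) 1 0 * pauli1 (a j₀) 0 1 :=
        pauli_off_val a hij hother
      have hQ2 : PauliOp a (eb j₀) (eb i₀) = pauli1 (a j₀) 1 0 * pauli1 (a i₀) 0 1 :=
        pauli_off_val a (Ne.symm hij) hother'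
      rw [hS, hQ1, hQ2]
      rcases hai with h1 | h1 <;> rcases haj with h2 | h2 <;> rw [h1, h2]
      · refine ⟨1, ?_⟩
        norm_num [pauli1]
      · refine ⟨0, ?_⟩
        norm_num [pauli1]
      · refine ⟨0, ?_⟩
        norm_num [pauli1]
      · refine ⟨1, ?_⟩
        norm_num [pauli1]
    · -- everything vanishes
      refine ⟨0, ?_⟩
      have hall : ∀ i j : Fin n, PauliOp a (eb i) (eb j) = 0 := by
        intro i j
        by_cases hij : i = j
        · subst hij
          by_cases hai : a i = 1 ∨ a i = 2
          · exact pauli_diag_zero a i hai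
          · have hki : k₀ ≠ i := fun hc => hai (hc ▸ hk₀)
            exact pauli_far_zero a hk₀ hki hki
        · by_cases hai : a i = 1 ∨ a i = 2
          · by_cases haj : a j = 1 ∨ a j = 2
            · by_cases hfar : ∃ k, (a k = 1 ∨ a k = 2) ∧ k ≠ i ∧ k ≠ j
              · obtain ⟨k, hk, hki, hkj⟩ := hfar
                exact pauli_far_zero a hk hki hkj
              · push_neg at hfar
                refine absurd ⟨i, j, hij, hai, haj, fun k hk => ?_⟩ hpair
                by_cases hki : k = i
                · exact Or.inl hki
                · exact Or.inr (hfar k hk hki)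
            · exact pauli_off_zero_right a hij (not12 haj)
          · exact pauli_off_zero_left a hij (not12 hai)
      simp [hall]

/-! ### W state facts -/

lemma star_Wstate (n : ℕ) (z : Fin n → Fin 2) : star (Wstate n z) = Wstate n z := by
  simp only [Wstate]
  split_ifs <;> simp

lemma Wstate_inner {n : ℕ} (hn : 1 ≤ n) :
    ∑ z, (starRingEnd ℂ) (Wstate n z) * Wstate n z = 1 := by
  have h : ∀ z : Fin n → Fin 2, (starRingEnd ℂ) (Wstate n z) * Wstate n z
      = (if (∑ k, ((z k : ℕ))) = 1 then ((n:ℂ))⁻¹ else 0) := by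
    intro z
    rw [Wstate]
    split_ifs with hz
    · rw [← Complex.ofReal_inv, Complex.conj_ofReal, ← Complex.ofReal_mul,
        ← mul_inv, Real.mul_self_sqrt (Nat.cast_nonneg n)]
      push_cast
      ring
    · simp
  simp_rw [h]
  rw [sum_weight_one (fun _ : Fin n → Fin 2 => ((n:ℂ))⁻¹)]
  rw [Finset.sum_const, Finset.card_univ, Fintype.card_fin, nsmul_eq_mul]
  rw [mul_inv_cancel₀]
  exact Nat.cast_ne_zero.mpr (by omega)

lemma Wproj_isHermitian (n : ℕ) : (Wproj n).IsHermitian := by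
  ext z w
  simp only [Wproj, conjTranspose_apply, vecMulVec_apply, Pi.star_apply,
    star_mul', star_star, star_Wstate]
  ring

lemma Wproj_trace {n : ℕ} (hn : 1 ≤ n) : (Wproj n).trace = 1 := by
  simp only [Matrix.trace, Matrix.diag, Wproj, vecMulVec_apply, Pi.star_apply]
  rw [← Wstate_inner hn]
  refine Finset.sum_congr rfl fun z _ => ?_
  rw [mul_comm]
  rfl

lemma Wproj_sq {n : ℕ} (hn : 1 ≤ n) : Wproj n * Wproj n = Wproj n := by
  ext z w
  simp only [Wproj, Matrix.mul_apply, vecMulVec_apply, Pi.star_apply]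
  have : ∀ k, (Wstate n z * star (Wstate n k)) * (Wstate n k * star (Wstate n w))
      = (Wstate n z * star (Wstate n w)) * ((starRingEnd ℂ) (Wstate n k) * Wstate n k) := by
    intro k
    simp only [star_Wstate]
    rw [show ((starRingEnd ℂ) (Wstate n k)) = star (Wstate n k) from rfl, star_Wstate]
    ring
  simp_rw [this]
  rw [← Finset.mul_sum, Wstate_inner hn, mul_one]

/-! ### the pExp formula for Wproj -/

lemma trace_PauliOp_Wproj {n : ℕ} (hn : 1 ≤ n) (a : Fin n → Fin 4) :
    (PauliOp a * Wproj n).trace = (n:ℂ)⁻¹ * ∑ i, ∑ j, PauliOp a (eb i) (eb j) := by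
  have h0 : (PauliOp a * Wproj n).trace
      = ∑ z, ∑ w, PauliOp a z w * (Wstate n w * star (Wstate n z)) := by
    simp only [Matrix.trace, Matrix.diag, Matrix.mul_apply, Wproj, vecMulVec_apply,
      Pi.star_apply]
  rw [h0]
  have h1 : ∀ z w : Fin n → Fin 2, PauliOp a z w * (Wstate n w * star (Wstate n z))
      = (if (∑ k, ((z k : ℕ))) = 1 then
          (if (∑ k, ((w k : ℕ))) = 1 then PauliOp a z w * ((n:ℂ))⁻¹ else 0) else 0) := by
    intro z w
    rw [star_Wstate]
    simp only [Wstate]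
    split_ifs with hw hz hz
    · rw [mul_comm ((↑(Real.sqrt n) : ℂ))⁻¹]
      congr 1
      rw [← mul_inv, ← Complex.ofReal_mul, Real.mul_self_sqrt (Nat.cast_nonneg n)]
      simp
    · ring
    · ring
    · ring
  simp_rw [h1]
  have h2 : ∀ z : Fin n → Fin 2,
      ∑ w : Fin n → Fin 2, (if (∑ k, ((z k : ℕ))) = 1 then
          (if (∑ k, ((w k : ℕ))) = 1 then PauliOp a z w * ((n:ℂ))⁻¹ else 0) else 0)
      = (if (∑ k, ((z k : ℕ))) = 1 then
          (∑ w : Fin n → Fin 2, (if (∑ k, ((w k : ℕ))) = 1 then PauliOp a z w * ((n:ℂ))⁻¹ else 0)) else 0) := by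
    intro z
    split_ifs <;> simp
  simp_rw [h2]
  rw [sum_weight_one (fun z => (∑ w : Fin n → Fin 2,
    (if (∑ k, ((w k : ℕ))) = 1 then PauliOp a z w * ((n:ℂ))⁻¹ else 0)))]
  have h3 : ∀ i : Fin n, ∑ w : Fin n → Fin 2,
      (if (∑ k, ((w k : ℕ))) = 1 then PauliOp a (eb i) w * ((n:ℂ))⁻¹ else 0)
      = ∑ j, PauliOp a (eb i) (eb j) * ((n:ℂ))⁻¹ := by
    intro i
    exact sum_weight_one (fun w => PauliOp a (eb i) w * ((n:ℂ))⁻¹)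
  simp_rw [h3]
  rw [Finset.mul_sum]
  refine Finset.sum_congr rfl fun i _ => ?_
  rw [Finset.mul_sum]
  exact Finset.sum_congr rfl fun j _ => (mul_comm _ _)

lemma pExp_Wproj_key {n : ℕ} (hn : 2 ≤ n) (hne : Even n) (a : Fin n → Fin 4) :
    pExp (Wproj n) a = 0 ∨ 4 / (n:ℝ)^2 ≤ (pExp (Wproj n) a)^2 := by
  obtain ⟨m, hm⟩ := key_int hne a
  have h1 : (1:ℕ) ≤ n := le_trans (by norm_num) hn
  have htr := trace_PauliOp_Wproj h1 a
  rw [hm] at htr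
  have hn0 : (0:ℝ) < (n:ℝ) := by
    have : (0:ℕ) < n := by omega
    exact_mod_cast this
  have hval : pExp (Wproj n) a = 2 * (m:ℝ) / (n:ℝ) := by
    rw [pExp, htr]
    have heq : (n:ℂ)⁻¹ * ((2 * m : ℤ) : ℂ) = ((2 * (m:ℝ) / (n:ℝ) : ℝ) : ℂ) := by
      rw [inv_mul_eq_div]
      push_cast
      ring
    rw [heq, Complex.ofReal_re]
  rcases eq_or_ne m 0 with h | h
  · left; rw [hval, h]; simp
  · right
    rw [hval]
    have hm1 : (1:ℝ) ≤ (m:ℝ)^2 := by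
      have h' : 1 ≤ m ∨ m ≤ -1 := by omega
      have : (1:ℤ) ≤ m^2 := by rcases h' with h' | h' <;> nlinarith
      exact_mod_cast this
    have hexp : (2 * (m:ℝ) / (n:ℝ))^2 = 4 * (m:ℝ)^2 / (n:ℝ)^2 := by ring
    rw [hexp]
    gcongr
    nlinarith


lemma trace_mul_real {m : Type*} [Fintype m] {P A : Matrix m m ℂ}
    (hP : P.IsHermitian) (hA : A.IsHermitian) :
    ((((P * A).trace).re : ℂ)) = (P * A).trace := by
  have h : (starRingEnd ℂ) ((P * A).trace) = (P * A).trace := by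
    have h1 : ((P * A)ᴴ).trace = star ((P * A).trace) := Matrix.trace_conjTranspose _
    rw [Matrix.conjTranspose_mul, hP.eq, hA.eq, Matrix.trace_mul_comm] at h1
    exact h1.symm
  exact Complex.conj_eq_iff_re.mp h

lemma sum_pExp_sq {n : ℕ} {A : Matrix (Fin n → Fin 2) (Fin n → Fin 2) ℂ}
    (hA : A.IsHermitian) :
    ∑ a : Fin n → Fin 4, (pExp A a)^2 = 2^n * ((A*A).trace).re := by
  have hp := parseval A
  have h1 : ∀ a : Fin n → Fin 4, ((PauliOp a * A).trace)^2 = (((pExp A a : ℝ) : ℂ))^2 := by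
    intro a; rw [pExp, trace_mul_real (PauliOp_isHermitian a) hA]
  simp_rw [h1] at hp
  have h2 : (∑ a : Fin n → Fin 4, (((pExp A a : ℝ) : ℂ))^2)
      = ((∑ a : Fin n → Fin 4, (pExp A a)^2 : ℝ) : ℂ) := by
    push_cast
    rfl
  rw [h2] at hp
  have := congrArg Complex.re hp
  rw [Complex.ofReal_re] at this
  rw [this]
  have h3 : ((2:ℂ)^n) = (((2:ℝ)^n : ℝ) : ℂ) := by push_cast; rfl
  rw [h3, Complex.re_ofReal_mul]

lemma pExp_sub {n : ℕ} (A B : Matrix (Fin n → Fin 2) (Fin n → Fin 2) ℂ)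
    (a : Fin n → Fin 4) : pExp (A - B) a = pExp A a - pExp B a := by
  rw [pExp, pExp, pExp, mul_sub, Matrix.trace_sub, Complex.sub_re]

end S15

set_option maxHeartbeats 1000000 in
theorem stmt_15 {n : ℕ} (hn : 2 ≤ n) (hne : Even n)
    (ρ' : Matrix (Fin n → Fin 2) (Fin n → Fin 2) ℂ) (hρ' : IsState ρ')
    (hclose : traceNorm (Wproj n - ρ') ≤ 1 / 10) :
    ∀ ε : ℝ, 0 ≤ ε → ε < 2 / (n : ℝ) ^ 2 →
      cdf ρ' ε ≤ 5 * traceNorm (Wproj n - ρ') := by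
  intro ε hε0 hεlt
  classical
  set Δ : Matrix (Fin n → Fin 2) (Fin n → Fin 2) ℂ := Wproj n - ρ' with hΔdef
  set t : ℝ := traceNorm Δ with htdef
  have hn1 : (1:ℕ) ≤ n := by omega
  have hnR : (0:ℝ) < n := by exact_mod_cast (by omega : 0 < n)
  have hρH : (Wproj n).IsHermitian := S15.Wproj_isHermitian n
  have hρ'H : ρ'.IsHermitian := hρ'.posSemidef.1
  have hΔH : Δ.IsHermitian := hρH.sub hρ'H
  have ht0 : 0 ≤ t := S15.traceNorm_nonneg Δ
  have hfrobΔ : S15.frob Δ ≤ t^2 := S15.frob_le_sq_traceNorm hΔH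
  have hfrob0 : 0 ≤ S15.frob Δ := S15.frob_nonneg Δ
  have hfrobρ : S15.frob (Wproj n) = 1 := by
    have h1 : (((Wproj n)ᴴ * (Wproj n)).trace) = (S15.frob (Wproj n) : ℂ) :=
      S15.trace_conjTranspose_mul_self (Wproj n)
    rw [hρH.eq, S15.Wproj_sq hn1, S15.Wproj_trace hn1] at h1
    exact_mod_cast h1.symm
  have hρΔ : |((Wproj n * Δ).trace).re| ≤ t := by
    have h1 := S15.abs_trace_mul_le (Wproj n) Δ
    have h2 : Real.sqrt (S15.frob (Wproj n)) = 1 := by rw [hfrobρ]; exact Real.sqrt_one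
    have h3 : Real.sqrt (S15.frob Δ) ≤ t := by
      calc Real.sqrt (S15.frob Δ) ≤ Real.sqrt (t^2) := Real.sqrt_le_sqrt hfrobΔ
        _ = t := Real.sqrt_sq ht0
    calc |((Wproj n * Δ).trace).re| ≤ ‖(Wproj n * Δ).trace‖ :=
          Complex.abs_re_le_norm _
      _ ≤ Real.sqrt (S15.frob (Wproj n)) * Real.sqrt (S15.frob Δ) := h1
      _ ≤ t := by rw [h2, one_mul]; exact h3
  have hΔΔ : ((Δ * Δ).trace).re = S15.frob Δ := by
    rw [S15.trace_mul_self_of_hermitian hΔH]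
    exact Complex.ofReal_re _
  have hclose' : t ≤ 1/10 := hclose
  have hpur : 1 - 2*t ≤ purity ρ' := by
    have hρ'eq : ρ' = Wproj n - Δ := by rw [hΔdef, sub_sub_cancel]
    have hmul : ρ' * ρ' = Wproj n * Wproj n - Wproj n * Δ - Δ * Wproj n + Δ * Δ := by
      rw [hρ'eq]
      noncomm_ring
    have htr : purity ρ' = ((Wproj n * Wproj n).trace).re - 2*((Wproj n * Δ).trace).re
        + S15.frob Δ := by
      rw [purity, hmul, Matrix.trace_add, Matrix.trace_sub, Matrix.trace_sub,
        Matrix.trace_mul_comm Δ (Wproj n), Complex.add_re, Complex.sub_re, Complex.sub_re, hΔΔ]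
      ring
    have hρρ : ((Wproj n * Wproj n).trace).re = 1 := by
      rw [S15.Wproj_sq hn1, S15.Wproj_trace hn1]
      simp
    rw [htr, hρρ]
    have h4 := abs_le.mp hρΔ
    linarith
  have hp45 : 4/5 ≤ purity ρ' := by linarith
  have hppos : 0 < purity ρ' := by linarith
  have h2n : (0:ℝ) < 2^n := by positivity
  have hD : (0:ℝ) < 2^n * purity ρ' := by positivity
  have hpars : ∑ a : Fin n → Fin 4, (pExp Δ a)^2 = 2^n * S15.frob Δ := by
    rw [S15.sum_pExp_sq hΔH, hΔΔ]
  have hpoint : ∀ a : Fin n → Fin 4,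
      (if (pExp ρ' a)^2 ≤ ε then pDist ρ' a else 0)
        ≤ 7 * (pExp Δ a)^2 / (2^n * purity ρ') := by
    intro a
    have hΔa : pExp Δ a = pExp (Wproj n) a - pExp ρ' a := S15.pExp_sub _ _ a
    split_ifs with hle
    · rw [pDist]
      have hkey : (pExp ρ' a)^2 ≤ 7 * (pExp Δ a)^2 := by
        rcases S15.pExp_Wproj_key hn hne a with hw | hw
        · have heq : pExp Δ a = - pExp ρ' a := by rw [hΔa, hw]; ring
          rw [heq]
          nlinarith [sq_nonneg (pExp ρ' a)]
        · have h2x : 2*(pExp ρ' a)^2 < (pExp (Wproj n) a)^2 := by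
            calc 2*(pExp ρ' a)^2 ≤ 2*ε := by linarith
              _ < 2*(2/(n:ℝ)^2) := by linarith
              _ = 4/(n:ℝ)^2 := by ring
              _ ≤ (pExp (Wproj n) a)^2 := hw
          rw [hΔa]
          nlinarith [sq_nonneg (5*pExp (Wproj n) a - 7*pExp ρ' a), sq_nonneg (pExp ρ' a)]
      gcongr
    · positivity
  rw [cdf]
  calc (∑ a : Fin n → Fin 4, if (pExp ρ' a)^2 ≤ ε then pDist ρ' a else 0)
      ≤ ∑ a : Fin n → Fin 4, 7 * (pExp Δ a)^2 / (2^n * purity ρ') :=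
        Finset.sum_le_sum (fun a _ => hpoint a)
    _ = 7 * (2^n * S15.frob Δ) / (2^n * purity ρ') := by
        rw [← hpars, Finset.mul_sum, Finset.sum_div]
    _ ≤ 5 * t := by
        have hcanc : 7 * (2^n * S15.frob Δ) / (2^n * purity ρ') = 7 * S15.frob Δ / purity ρ' := by
          rw [div_eq_div_iff (ne_of_gt hD) (ne_of_gt hppos)]
          ring
        rw [hcanc, div_le_iff₀ hppos]
        nlinarith [mul_nonneg ht0 ht0]
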